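/- Let Ω be a finite set and G ≤ Sym(Ω) a permutation group with b(G) ≥ 2. Suppose α, β ∈ Ω are distinct, γ ∈ Ω with γ ∉ {α, β}, and E_α, E_β are edges of the Saxl hypergraph Σ(G) with α, γ ∈ E_α and β, γ ∈ E_β. Then there exist edges E'_α, E'_β of Σ(G) with α, γ ∈ E'_α and β, γ ∈ E'_β such that α ∉ E'_α ∩ E'_β, β ∉ E'_α ∩ E'_β, and |E'_α ∩ E'_β| ≤ |E_α ∩ E_β|. In particular, E'_α ≠ E'_β. -/

import Mathlib

/-- `B` is a base for the permutation group `G ≤ Sym(Ω)`: its pointwise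
stabiliser in `G` is trivial. -/
def IsBase {Ω : Type*} (G : Subgroup (Equiv.Perm Ω)) (B : Set Ω) : Prop :=
  ∀ g ∈ G, (∀ b ∈ B, g b = b) → g = 1

/-- The base size `b(G)`: the minimum cardinality of a base for `G`. -/
noncomputable def baseSize {Ω : Type*} (G : Subgroup (Equiv.Perm Ω)) : ℕ :=
  sInf {n | ∃ B : Set Ω, IsBase G B ∧ B.ncard = n}

/-- `E` is an edge of the Saxl hypergraph `Σ(G)`: a base for `G` of size
`b(G)`. -/
def IsSaxlEdge {Ω : Type*} (G : Subgroup (Equiv.Perm Ω)) (E : Set Ω) : Prop :=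
  IsBase G E ∧ E.ncard = baseSize G

lemma base_card_ge {Ω : Type*} (G : Subgroup (Equiv.Perm Ω)) {B : Set Ω}
    (h : IsBase G B) : baseSize G ≤ B.ncard :=
  Nat.sInf_le ⟨B, h, rfl⟩

lemma swap_lemma {Ω : Type*} [Fintype Ω] (G : Subgroup (Equiv.Perm Ω))
    {E : Set Ω} {x : Ω} (hE : IsSaxlEdge G E) (hx : x ∈ E) :
    ∃ y ∉ E, IsSaxlEdge G (insert y (E \ {x})) := by
  have hfin : E.Finite := Set.toFinite E
  have hd1 : (E \ {x}).ncard + 1 = E.ncard :=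
    Set.ncard_diff_singleton_add_one hx hfin
  have hnb : ¬ IsBase G (E \ {x}) := by
    intro h
    have := base_card_ge G h
    have := hE.2
    omega
  unfold IsBase at hnb
  push_neg at hnb
  obtain ⟨g, hgG, hgfix, hg1⟩ := hnb
  have hgx : g x ≠ x := by
    intro h
    apply hg1
    apply hE.1 g hgG
    intro b hb
    rcases eq_or_ne b x with rfl | hbx
    · exact h
    · exact hgfix b ⟨hb, hbx⟩
  refine ⟨g x, ?_, ?_, ?_⟩
  · intro hmem
    rcases eq_or_ne (g x) x with h | h
    · exact hgx h
    · have : g (g x) = g x := hgfix (g x) ⟨hmem, h⟩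
      exact hgx (g.injective this)
  · -- base
    intro h hhG hfix
    have hk : g⁻¹ * h * g ∈ G := mul_mem (mul_mem (inv_mem hgG) hhG) hgG
    have hk1 : g⁻¹ * h * g = 1 := by
      apply hE.1 _ hk
      intro b hb
      rcases eq_or_ne b x with rfl | hbx
      · have h1 : h (g b) = g b := hfix (g b) (Set.mem_insert _ _)
        simp [Equiv.Perm.mul_apply, h1]
      · have h1 : g b = b := hgfix b ⟨hb, hbx⟩
        have h2 : h b = b := hfix b (Set.mem_insert_of_mem _ ⟨hb, hbx⟩)
        simp [Equiv.Perm.mul_apply, h1, h2]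
        conv_lhs => rw [← h1]
        exact Equiv.symm_apply_apply g b
    have : h = g * (g⁻¹ * h * g) * g⁻¹ := by group
    rw [hk1] at this
    simpa using this
  · have hnm : g x ∉ E \ {x} := by
      intro hmem
      have : g (g x) = g x := hgfix (g x) hmem
      exact hgx (g.injective this)
    rw [Set.ncard_insert_of_notMem hnm (hfin.diff (t := {x}))]
    rw [hd1, hE.2]

theorem statement_3 {Ω : Type*} [Fintype Ω] (G : Subgroup (Equiv.Perm Ω))
    (hb : 2 ≤ baseSize G) (α β γ : Ω) (hαβ : α ≠ β) (hγ : γ ∉ ({α, β} : Set Ω))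
    (Eα Eβ : Set Ω) (hEα : IsSaxlEdge G Eα) (hEβ : IsSaxlEdge G Eβ)
    (hα : α ∈ Eα) (hγα : γ ∈ Eα) (hβ : β ∈ Eβ) (hγβ : γ ∈ Eβ) :
    ∃ Eα' Eβ' : Set Ω, IsSaxlEdge G Eα' ∧ IsSaxlEdge G Eβ' ∧
      α ∈ Eα' ∧ γ ∈ Eα' ∧ β ∈ Eβ' ∧ γ ∈ Eβ' ∧
      α ∉ Eα' ∩ Eβ' ∧ β ∉ Eα' ∩ Eβ' ∧
      (Eα' ∩ Eβ').ncard ≤ (Eα ∩ Eβ).ncard ∧ Eα' ≠ Eβ' := by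
  have hγa : γ ≠ α := by intro h; exact hγ (by simp [h])
  have hγb : γ ≠ β := by intro h; exact hγ (by simp [h])
  by_cases hbA : β ∈ Eα
  · obtain ⟨p, hp, hEα'⟩ := swap_lemma G hEα hbA
    set Eα' := insert p (Eα \ {β}) with hEα'def
    have hαEα' : α ∈ Eα' := Set.mem_insert_of_mem _ ⟨hα, hαβ⟩
    have hγEα' : γ ∈ Eα' := Set.mem_insert_of_mem _ ⟨hγα, hγb⟩
    have hβnEα' : β ∉ Eα' := by
      intro h
      rcases h with h | h
      · exact hp (h ▸ hbA)
      · exact h.2 rfl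
    by_cases haB : α ∈ Eβ
    · -- double swap
      obtain ⟨q, hq, hEβ'⟩ := swap_lemma G hEβ haB
      set Eβ' := insert q (Eβ \ {α}) with hEβ'def
      have hβEβ' : β ∈ Eβ' := Set.mem_insert_of_mem _ ⟨hβ, hαβ.symm⟩
      have hγEβ' : γ ∈ Eβ' := Set.mem_insert_of_mem _ ⟨hγβ, hγa⟩
      have hαnEβ' : α ∉ Eβ' := by
        intro h
        rcases h with h | h
        · exact hq (h ▸ haB)
        · exact h.2 rfl
      refine ⟨Eα', Eβ', hEα', hEβ', hαEα', hγEα', hβEβ', hγEβ',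
        fun h => hαnEβ' h.2, fun h => hβnEα' h.1, ?_, ?_⟩
      · have hsub : Eα' ∩ Eβ' ⊆ insert p (insert q (((Eα ∩ Eβ) \ {α}) \ {β})) := by
          rintro x ⟨hx1, hx2⟩
          rcases hx1 with rfl | hx1
          · exact Set.mem_insert _ _
          rcases hx2 with rfl | hx2
          · exact Set.mem_insert_of_mem _ (Set.mem_insert _ _)
          exact Set.mem_insert_of_mem _ (Set.mem_insert_of_mem _
            ⟨⟨⟨hx1.1, hx2.1⟩, hx2.2⟩, hx1.2⟩)
        have hβmem : β ∈ (Eα ∩ Eβ) \ {α} := ⟨⟨hbA, hβ⟩, hαβ.symm⟩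
        have hαmem : α ∈ Eα ∩ Eβ := ⟨hα, haB⟩
        calc (Eα' ∩ Eβ').ncard ≤ (insert p (insert q (((Eα ∩ Eβ) \ {α}) \ {β}))).ncard :=
              Set.ncard_le_ncard hsub (Set.toFinite _)
          _ ≤ (insert q (((Eα ∩ Eβ) \ {α}) \ {β})).ncard + 1 := Set.ncard_insert_le _ _
          _ ≤ (((Eα ∩ Eβ) \ {α}) \ {β}).ncard + 1 + 1 := by
              exact Nat.add_le_add_right (Set.ncard_insert_le _ _) 1
          _ = ((Eα ∩ Eβ) \ {α}).ncard + 1 := by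
              rw [Set.ncard_diff_singleton_add_one hβmem (Set.toFinite _)]
          _ = (Eα ∩ Eβ).ncard := Set.ncard_diff_singleton_add_one hαmem (Set.toFinite _)
      · intro h
        exact hαnEβ' (h ▸ hαEα')
    · -- only swap β out of Eα
      refine ⟨Eα', Eβ, hEα', hEβ, hαEα', hγEα', hβ, hγβ,
        fun h => haB h.2, fun h => hβnEα' h.1, ?_, ?_⟩
      · have hsub : Eα' ∩ Eβ ⊆ insert p ((Eα ∩ Eβ) \ {β}) := by
          rintro x ⟨hx1, hx2⟩
          rcases hx1 with rfl | hx1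
          · exact Set.mem_insert _ _
          exact Set.mem_insert_of_mem _ ⟨⟨hx1.1, hx2⟩, hx1.2⟩
        calc (Eα' ∩ Eβ).ncard ≤ (insert p ((Eα ∩ Eβ) \ {β})).ncard :=
              Set.ncard_le_ncard hsub (Set.toFinite _)
          _ ≤ ((Eα ∩ Eβ) \ {β}).ncard + 1 := Set.ncard_insert_le _ _
          _ = (Eα ∩ Eβ).ncard := Set.ncard_diff_singleton_add_one ⟨hbA, hβ⟩ (Set.toFinite _)
      · intro h
        exact hβnEα' (h ▸ hβ)
  · by_cases haB : α ∈ Eβ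
    · -- swap α out of Eβ
      obtain ⟨q, hq, hEβ'⟩ := swap_lemma G hEβ haB
      set Eβ' := insert q (Eβ \ {α}) with hEβ'def
      have hβEβ' : β ∈ Eβ' := Set.mem_insert_of_mem _ ⟨hβ, hαβ.symm⟩
      have hγEβ' : γ ∈ Eβ' := Set.mem_insert_of_mem _ ⟨hγβ, hγa⟩
      have hαnEβ' : α ∉ Eβ' := by
        intro h
        rcases h with h | h
        · exact hq (h ▸ haB)
        · exact h.2 rfl
      refine ⟨Eα, Eβ', hEα, hEβ', hα, hγα, hβEβ', hγEβ',
        fun h => hαnEβ' h.2, fun h => hbA h.1, ?_, ?_⟩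
      · have hsub : Eα ∩ Eβ' ⊆ insert q ((Eα ∩ Eβ) \ {α}) := by
          rintro x ⟨hx1, hx2⟩
          rcases hx2 with rfl | hx2
          · exact Set.mem_insert _ _
          exact Set.mem_insert_of_mem _ ⟨⟨hx1, hx2.1⟩, hx2.2⟩
        calc (Eα ∩ Eβ').ncard ≤ (insert q ((Eα ∩ Eβ) \ {α})).ncard :=
              Set.ncard_le_ncard hsub (Set.toFinite _)
          _ ≤ ((Eα ∩ Eβ) \ {α}).ncard + 1 := Set.ncard_insert_le _ _
          _ = (Eα ∩ Eβ).ncard := Set.ncard_diff_singleton_add_one ⟨hα, haB⟩ (Set.toFinite _)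
      · intro h
        exact hαnEβ' (h ▸ hα)
    · refine ⟨Eα, Eβ, hEα, hEβ, hα, hγα, hβ, hγβ,
        fun h => haB h.2, fun h => hbA h.1, le_refl _, ?_⟩
      intro h
      exact haB (h ▸ hα)
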